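/- arXiv:1912.05368 — 3 statements merged into one kernel-verified Lean document; each statement's English description precedes it below -/
import Mathlib

section
/- Let q ≠ 0, q² ≠ 1 in a field, let a ∈ ℤ with a ≤ 0, and c a scalar. Define, for s ∈ {0,1}, the coefficients α^{(s)}_{k,N} = ∑_{1−s ≤ ℓ_1 < ℓ_2 < ... < ℓ_k ≤ N} [2ℓ_1+s]_q² [2ℓ_2+s]_q² ⋯ [2ℓ_k+s]_q² (with α^{(s)}_{0,N} = 1 and α^{(s)}_{k,N} = 0 if k > N+s or k < 0). Then the ι-divided power B^{(r)}_{i,s} = (B^{r_p}/[r]_q!) ∏_{k=1}^{r_e} (B² + q c [2(k−1+r_p(1−s)) + s]_q²) — equivalently B^{(r)}_{i,1} = (B^{r_p}/[r]_q!) ∏_{k=1}^{r_e}(B² + qc[2k−1]_q²) and B^{(r)}_{i,0} = (B^{r_p}/[r]_q!) ∏_{k=1}^{r_e}(B² + qc[2(k−1+r_p)]_q²) — expands as B^{(r)}_{i,s} = (1/[r]_q!) ∑_{k=0}^{r_e} (qc)^k α^{(s)}_{k, r_e + r_p(1−s) − 1} B^{r−2k}, where r = 2 r_e + r_p with r_p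 ∈ {0,1}. -/
open Finset

/-- The balanced `q`-number `[m]_q = (q^m - q^{-m})/(q - q⁻¹)`. -/
noncomputable def qNum {K : Type*} [Field K] (q : K) (m : ℤ) : K :=
  (q ^ m - q ^ (-m)) / (q - q⁻¹)

/-- The `q`-factorial `[n]_q!`. -/
noncomputable def qFact {K : Type*} [Field K] (q : K) (n : ℕ) : K :=
  ∏ ℓ ∈ Finset.range n, qNum q (ℓ + 1)

/-- The coefficient `α^{(s)}_{k,N} = ∑_{1−s ≤ ℓ_1 < ⋯ < ℓ_k ≤ N} [2ℓ_1+s]_q² ⋯ [2ℓ_k+s]_q²`,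
encoded as a sum over `k`-element subsets of `{1−s, …, N} ⊆ ℤ`; it equals `1` for `k = 0`
and `0` when `k > N + s`. -/
noncomputable def alphaC {K : Type*} [Field K] (q : K) (s k : ℕ) (N : ℤ) : K :=
  ∑ S ∈ (Finset.Icc (1 - (s : ℤ)) N).powersetCard k,
    ∏ ℓ ∈ S, (qNum q (2 * ℓ + s)) ^ 2

lemma alphaC_zero {K : Type*} [Field K] (q : K) (s : ℕ) (N : ℤ) : alphaC q s 0 N = 1 := by
  simp [alphaC]

lemma alphaC_eq_zero {K : Type*} [Field K] (q : K) (s k : ℕ) (N : ℤ)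
    (h : N + s ≤ k) : alphaC q s (k+1) N = 0 := by
  have hcard : (Finset.Icc (1 - (s : ℤ)) N).card < k + 1 := by
    rw [Int.card_Icc]; omega
  rw [alphaC, Finset.powersetCard_eq_empty.2 hcard, Finset.sum_empty]

lemma alphaC_rec {K : Type*} [Field K] (q : K) (s k : ℕ) (N : ℤ) (hs : s ≤ 1)
    (hN : 0 ≤ N + 1) :
    alphaC q s (k+1) (N+1)
      = alphaC q s (k+1) N + (qNum q (2*(N+1)+s))^2 * alphaC q s k N := by
  by_cases hle : 1 - (s : ℤ) ≤ N + 1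
  · have hnm : (N + 1) ∉ Finset.Icc (1 - (s : ℤ)) N := by simp
    have hIcc : Finset.Icc (1 - (s : ℤ)) (N+1) = insert (N+1) (Finset.Icc (1 - (s:ℤ)) N) := by
      ext x; simp; omega
    rw [alphaC, hIcc, Finset.powersetCard_succ_insert hnm,
      Finset.sum_union, Finset.sum_image]
    · congr 1
      rw [alphaC, Finset.mul_sum]
      refine Finset.sum_congr rfl fun S hS => ?_
      have hx : (N+1) ∉ S := fun hx => hnm ((Finset.mem_powersetCard.1 hS).1 hx)
      rw [Finset.prod_insert hx]
    · intro S hS T hT hST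
      have hxS : (N+1) ∉ S := fun hx => hnm ((Finset.mem_powersetCard.1 hS).1 hx)
      have hxT : (N+1) ∉ T := fun hx => hnm ((Finset.mem_powersetCard.1 hT).1 hx)
      rw [← Finset.erase_insert hxS, ← Finset.erase_insert hxT, hST]
    · rw [Finset.disjoint_left]
      intro S hS hS'
      obtain ⟨T, hT, rfl⟩ := Finset.mem_image.1 hS'
      exact hnm ((Finset.mem_powersetCard.1 hS).1 (Finset.mem_insert_self _ _))
  · -- degenerate: N + 1 = 0 and s = 0
    have hs0 : (s : ℤ) = 0 := by omega
    have hN0 : N + 1 = 0 := by omega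
    have hq0 : qNum q (2*(N+1)+s) = 0 := by
      rw [hN0, hs0]; simp [qNum]
    rw [hq0, hN0]
    have hs' : s = 0 := by exact_mod_cast hs0
    have hN' : N = -1 := by omega
    subst hs' hN'
    have h1 : Finset.Icc (1 - ((0:ℕ) : ℤ)) 0 = ∅ := by
      apply Finset.Icc_eq_empty; norm_num
    have h2 : Finset.Icc (1 - ((0:ℕ) : ℤ)) (-1) = ∅ := by
      apply Finset.Icc_eq_empty; norm_num
    rw [alphaC, alphaC, h1, h2]; simp

lemma key_expansion {K : Type*} [Field K] {R : Type*} [Ring R] [Algebra K R]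
    (q c : K) (B : R) (s rp : ℕ) (hs : s ≤ 1) (hrp : rp ≤ 1) (re : ℕ) :
    B ^ rp * ((List.range re).map (fun k =>
        B ^ 2 + algebraMap K R
          (q * c * (qNum q (2 * ((k : ℤ) + rp * (1 - (s : ℤ))) + s)) ^ 2))).prod
    = ∑ k ∈ Finset.range (re + 1),
        ((q * c) ^ k * alphaC q s k ((re : ℤ) + rp * (1 - (s : ℤ)) - 1))
          • B ^ (2 * re + rp - 2 * k) := by
  induction re with
  | zero => simp [alphaC_zero]
  | succ re ih =>
    set t : ℤ := (rp : ℤ) * (1 - (s : ℤ)) with ht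
    have hts : t + s ≤ 1 := by
      have h1 : (s : ℤ) ≤ 1 := by exact_mod_cast hs
      have h2 : (rp : ℤ) ≤ 1 := by exact_mod_cast hrp
      have h3 : (0:ℤ) ≤ s := by positivity
      have h4 : (0:ℤ) ≤ rp := by positivity
      nlinarith
    have ht0 : 0 ≤ t := by
      have h1 : (s : ℤ) ≤ 1 := by exact_mod_cast hs
      have h4 : (0:ℤ) ≤ rp := by positivity
      have : (0:ℤ) ≤ 1 - s := by omega
      positivity
    set N : ℤ := (re : ℤ) + t - 1 with hN
    set a0 : K := (qNum q (2*(N+1)+s))^2 with ha0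
    -- LHS splits off last factor
    have hstep : B ^ rp * ((List.range (re+1)).map (fun k =>
          B ^ 2 + algebraMap K R (q * c * (qNum q (2 * ((k : ℤ) + t) + s)) ^ 2))).prod
        = (B ^ rp * ((List.range re).map (fun k =>
            B ^ 2 + algebraMap K R (q * c * (qNum q (2 * ((k : ℤ) + t) + s)) ^ 2))).prod)
          * (B ^ 2 + algebraMap K R (q * c * (qNum q (2 * ((re : ℤ) + t) + s)) ^ 2)) := by
      rw [List.range_succ]
      simp [mul_assoc]
    rw [hstep, ih]
    have hNre : 2 * ((re : ℤ) + t) + s = 2*(N+1)+s := by rw [hN]; ring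
    rw [hNre]
    -- now RHS
    simp only [Nat.cast_add, Nat.cast_one]
    have hcast : (re : ℤ) + 1 + t - 1 = N + 1 := by rw [hN]; ring
    simp only [hcast]
    conv_rhs => rw [Finset.sum_range_succ']
    have hsplit : ∀ k ∈ Finset.range (re+1),
        ((q*c)^(k+1) * alphaC q s (k+1) (N+1)) • B ^ (2*(re+1)+rp - 2*(k+1))
        = ((q*c)^(k+1) * alphaC q s (k+1) N) • B ^ (2*re+rp-2*k)
          + ((q*c*a0) * ((q*c)^k * alphaC q s k N)) • B ^ (2*re+rp-2*k) := by
      intro k hk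
      have he : 2*(re+1)+rp - 2*(k+1) = 2*re+rp-2*k := by omega
      rw [he, alphaC_rec q s k N hs (by omega), ← add_smul]
      congr 1
      rw [ha0]; ring
    conv_rhs => rw [Finset.sum_congr rfl hsplit, Finset.sum_add_distrib]
    have hzero : ((q*c)^(re+1) * alphaC q s (re+1) N) • B ^ (2*(re+1)+rp-2*(re+1)) = 0 := by
      rw [alphaC_eq_zero q s re N (by omega)]
      simp
    have h1 : (∑ k ∈ Finset.range (re+1),
          ((q*c)^(k+1) * alphaC q s (k+1) N) • B ^ (2*re+rp-2*k))
        + ((q*c)^0 * alphaC q s 0 (N+1)) • B ^ (2*(re+1)+rp - 2*0)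
        = (∑ k ∈ Finset.range (re+1),
            ((q*c)^k * alphaC q s k N) • B ^ (2*re+rp-2*k)) * B^2 := by
      rw [Finset.sum_mul]
      have hterm : ∀ k ∈ Finset.range (re+1),
          (((q*c)^k * alphaC q s k N) • B ^ (2*re+rp-2*k)) * B^2
          = ((q*c)^k * alphaC q s k N) • B ^ (2*(re+1)+rp-2*k) := by
        intro k hk
        simp only [Finset.mem_range] at hk
        rw [smul_mul_assoc, ← pow_add]
        congr 2
        omega
      rw [Finset.sum_congr rfl hterm]
      conv_rhs => rw [Finset.sum_range_succ']
      rw [Finset.sum_range_succ, alphaC_eq_zero q s re N (by omega)]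
      simp only [mul_zero, zero_smul, add_zero]
      congr 1
      · refine Finset.sum_congr rfl fun k hk => ?_
        congr 2
        omega
      · simp [alphaC_zero]
    have h2 : (∑ k ∈ Finset.range (re+1),
          ((q*c)^k * alphaC q s k N) • B ^ (2*re+rp-2*k))
            * algebraMap K R (q * c * (qNum q (2*(N+1)+s))^2)
        = ∑ k ∈ Finset.range (re+1),
            ((q*c*a0) * ((q*c)^k * alphaC q s k N)) • B ^ (2*re+rp-2*k) := by
      rw [Finset.sum_mul]
      refine Finset.sum_congr rfl fun k hk => ?_
      rw [smul_mul_assoc, ← Algebra.commutes, ← Algebra.smul_def, smul_smul, ha0]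
      ring_nf
    rw [mul_add, ← h1, h2]
    abel

/-- Lemma 4.2: expansion of the ι-divided powers.  With `r = 2 r_e + r_p`,
`r_p ∈ {0,1}`, and `s ∈ {0,1}`, the ι-divided power
`B^{(r)}_{i,s} = (B^{r_p}/[r]_q!) ∏_{k=1}^{r_e} (B² + q c [2(k−1+r_p(1−s))+s]_q²)`
equals `(1/[r]_q!) ∑_{k=0}^{r_e} (qc)^k α^{(s)}_{k, r_e + r_p(1−s) − 1} B^{r−2k}`. -/
theorem iota_divided_power_expansion {K : Type*} [Field K] {R : Type*} [Ring R]
    [Algebra K R] (q c : K) (hq : q ≠ 0) (hroot : ∀ n : ℕ, 0 < n → q ^ n ≠ 1)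
    (B : R) (s : ℕ) (hs : s ≤ 1) (r re rp : ℕ) (hrp : rp ≤ 1) (hr : r = 2 * re + rp) :
    (qFact q r)⁻¹ •
        (B ^ rp *
          ((List.range re).map (fun k =>
            B ^ 2 + algebraMap K R
              (q * c * (qNum q (2 * ((k : ℤ) + rp * (1 - (s : ℤ))) + s)) ^ 2))).prod)
      = (qFact q r)⁻¹ •
          ∑ k ∈ Finset.range (re + 1),
            ((q * c) ^ k * alphaC q s k ((re : ℤ) + rp * (1 - (s : ℤ)) - 1))
              • B ^ (r - 2 * k) := by
  subst hr
  congr 1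
  exact key_expansion q c B s rp hs hrp re
end

section
/- For integers a ≤ 0 with a odd and naturals m, m' of equal parity with m+m' ≤ −1−a, one has the identity ∑_{r=0}^{R} [1−a choose m'+2r]_q α^{(0)}_{r, r+m'_e+m'_p−1} α^{(1)}_{R−r, (−a−1)/2 − r − m'_e − m'_p} = ∑_{r=0}^{R} [1−a choose m+2r]_q α^{(1)}_{r, r+m_e−1} α^{(0)}_{R−r, −a_e − r − m_e − 1}, where R = (1−a−m−m')/2, α^{(s)}_{k,N} = ∑_{1−s ≤ ℓ_1 < ... < ℓ_k ≤ N} [2ℓ_1+s]_q² ⋯ [2ℓ_k+s]_q², and d_e, d_p denote ⌊d/2⌋ and the parity of d. -/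
open Finset

noncomputable def qBinom {K : Type*} [Field K] (q : K) (N m : ℕ) : K :=
  qFact q N / (qFact q m * qFact q (N - m))

lemma qBinom_symm {K : Type*} [Field K] (q : K) (N k : ℕ) (hk : k ≤ N) :
    qBinom q N (N - k) = qBinom q N k := by
  unfold qBinom
  rw [Nat.sub_sub_self hk, mul_comm]

/-- the concrete `q`-binomial identity underlying the symmetry
`ρ_{m,m'} = ρ_{m',m}` for `a` odd: with `R = (1−a−m−m')/2`,
`∑_{r=0}^{R} [1−a choose m'+2r]_q α^{(0)}_{r, r+m'_e+m'_p−1} α^{(1)}_{R−r, (−a−1)/2−r−m'_e−m'_p}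
 = ∑_{r=0}^{R} [1−a choose m+2r]_q α^{(1)}_{r, r+m_e−1} α^{(0)}_{R−r, −a_e−r−m_e−1}`. -/
theorem symmetry_q_binomial_identity {K : Type*} [Field K] (q : K) (hq : q ≠ 0)
    (hroot : ∀ n : ℕ, 0 < n → q ^ n ≠ 1) (a : ℤ) (ha : a ≤ 0) (haodd : Odd a)
    (m m' : ℕ) (hpar : m % 2 = m' % 2) (hmm : (m : ℤ) + (m' : ℤ) ≤ -1 - a) :
    (∑ r ∈ Finset.range (((1 - a - (m : ℤ) - (m' : ℤ)) / 2).toNat + 1),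
        qBinom q (1 - a).toNat (m' + 2 * r)
          * alphaC q 0 r (((m' / 2 + m' % 2 : ℕ) : ℤ) + r - 1)
          * alphaC q 1 (((1 - a - (m : ℤ) - (m' : ℤ)) / 2).toNat - r)
              ((-a - 1) / 2 - (r : ℤ) - ((m' / 2 : ℕ) : ℤ) - ((m' % 2 : ℕ) : ℤ)))
      = ∑ r ∈ Finset.range (((1 - a - (m : ℤ) - (m' : ℤ)) / 2).toNat + 1),
          qBinom q (1 - a).toNat (m + 2 * r)
            * alphaC q 1 r (((m / 2 : ℕ) : ℤ) + r - 1)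
            * alphaC q 0 (((1 - a - (m : ℤ) - (m' : ℤ)) / 2).toNat - r)
                (-(a / 2) - (r : ℤ) - ((m / 2 : ℕ) : ℤ) - 1) := by
  obtain ⟨t, ht⟩ := haodd
  set R : ℕ := ((1 - a - (m : ℤ) - (m' : ℤ)) / 2).toNat with hRdef
  have hR : (R : ℤ) = (1 - a - (m : ℤ) - (m' : ℤ)) / 2 := by
    rw [hRdef]; exact Int.toNat_of_nonneg (by omega)
  have h2R : 2 * (R : ℤ) = 1 - a - (m : ℤ) - (m' : ℤ) := by omega
  have hNa : (((1 - a).toNat : ℤ)) = 1 - a := Int.toNat_of_nonneg (by omega)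
  conv_rhs => rw [← Finset.sum_range_reflect]
  refine Finset.sum_congr rfl ?_
  intro r hr
  rw [Finset.mem_range] at hr
  have hrR : r ≤ R := by omega
  have e1 : R + 1 - 1 - r = R - r := by omega
  rw [e1]
  have hb : m + 2 * (R - r) = (1 - a).toNat - (m' + 2 * r) := by omega
  have hk : m' + 2 * r ≤ (1 - a).toNat := by omega
  rw [hb, qBinom_symm q _ _ hk]
  have e2 : R - (R - r) = r := by omega
  rw [e2]
  have e3 : (((m / 2 : ℕ) : ℤ)) + ((R - r : ℕ) : ℤ) - 1
      = (-a - 1) / 2 - (r : ℤ) - ((m' / 2 : ℕ) : ℤ) - ((m' % 2 : ℕ) : ℤ) := by omega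
  have e4 : -(a / 2) - ((R - r : ℕ) : ℤ) - ((m / 2 : ℕ) : ℤ) - 1
      = (((m' / 2 + m' % 2 : ℕ) : ℤ)) + (r : ℤ) - 1 := by omega
  rw [e3, e4]
  ring
end

section
/- Define c^{(b)}_{a,N} = ∑_{0 ≤ p_1 ≤ p_2 ≤ ... ≤ p_{b−a}, each p_r ≤ a'} ∏_{r=1}^{b−a} γ(N_0 − a' + p_r, |N|_{0; b−p_r−r+1} − (b−p_r−r)) — where a' is the lower index, N = (N_0,...,N_{b+1}) is a tuple of naturals, |N|_{0;p} = N_0 + ... + N_p, γ is any function of two arguments valued in a commutative ring, and c^{(a')}_{a',N} = 1. Then for tuples N' = (N_0−1, N_1+N_2, N_3, ..., N_{T+1}) and N'' = (N_0, N_1+N_2−1, N_3, ..., N_{T+1}) one has: (i) c^{(T)}_{0,N} = c^{(T−1)}_{0,N''} · γ(N_0, N_0+N_1), and (ii) c^{(T)}_{u,N} = c^{(T−1)}_{u−1,N'} + γ(N_0, N_0+N_1) · c^{(T−1)}_{u,N''} for 1 ≤ u ≤ T−1. -/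
open Finset

private lemma snoc_mono' {m a : ℕ} (q : Fin m → Fin (a+1))
    (hq : ∀ i j, i ≤ j → q i ≤ q j) :
    ∀ i j : Fin (m+1), i ≤ j →
      (Fin.snoc q (Fin.last a) : Fin (m+1) → Fin (a+1)) i
        ≤ (Fin.snoc q (Fin.last a) : Fin (m+1) → Fin (a+1)) j := by
  intro i j hij
  rcases Fin.eq_castSucc_or_eq_last j with ⟨j0, rfl⟩ | rfl
  · rcases Fin.eq_castSucc_or_eq_last i with ⟨i0, rfl⟩ | rfl
    · simp only [Fin.snoc_castSucc]
      exact hq i0 j0 (by exact_mod_cast hij)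
    · exact absurd hij (not_le.2 (Fin.castSucc_lt_last j0))
  · simp only [Fin.snoc_last]
    exact Fin.le_last _

private lemma sum_split' {R : Type*} [AddCommMonoid R] {m a : ℕ}
    (f : (Fin (m+1) → Fin (a+1)) → R) :
    ∑ p ∈ Finset.univ.filter (fun p : Fin (m+1) → Fin (a+1) => ∀ i j, i ≤ j → p i ≤ p j), f p
    = (∑ q ∈ Finset.univ.filter (fun q : Fin (m+1) → Fin a => ∀ i j, i ≤ j → q i ≤ q j),
        f (fun r => (q r).castSucc))
      + ∑ q ∈ Finset.univ.filter (fun q : Fin m → Fin (a+1) => ∀ i j, i ≤ j → q i ≤ q j),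
        f (Fin.snoc q (Fin.last a)) := by
  rw [← Finset.sum_filter_add_sum_filter_not
    (Finset.univ.filter (fun p : Fin (m+1) → Fin (a+1) => ∀ i j, i ≤ j → p i ≤ p j))
    (fun p => p (Fin.last m) = Fin.last a), add_comm]
  congr 1
  · refine Finset.sum_bij' (i := fun p hp => fun r => (p r).castPred ?_)
      (j := fun q _ => fun r => (q r).castSucc) ?_ ?_ ?_ ?_ ?_
    · simp only [Finset.mem_filter, Finset.mem_univ, true_and] at hp
      exact fun h => hp.2 (le_antisymm (Fin.le_last _)
        (h ▸ hp.1 r (Fin.last m) (Fin.le_last r)))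
    · intro p hp
      simp only [Finset.mem_filter, Finset.mem_univ, true_and] at hp ⊢
      intro i j hij
      exact Fin.castPred_le_castPred_iff.2 (hp.1 i j hij)
    · intro q hq
      simp only [Finset.mem_filter, Finset.mem_univ, true_and] at hq ⊢
      refine ⟨fun i j hij => Fin.castSucc_le_castSucc_iff.2 (hq i j hij), ?_⟩
      exact fun h => absurd h (Fin.castSucc_lt_last _).ne
    · intro p hp; funext r; simp [Fin.castSucc_castPred]
    · intro q hq; funext r; simp
    · intro p hp; congr 1
  · refine Finset.sum_bij' (i := fun p _ => fun r : Fin m => p r.castSucc)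
      (j := fun q _ => Fin.snoc q (Fin.last a)) ?_ ?_ ?_ ?_ ?_
    · intro p hp
      simp only [Finset.mem_filter, Finset.mem_univ, true_and] at hp ⊢
      exact fun i j hij => hp.1 _ _ (Fin.castSucc_le_castSucc_iff.2 hij)
    · intro q hq
      simp only [Finset.mem_filter, Finset.mem_univ, true_and] at hq ⊢
      exact ⟨snoc_mono' q hq, Fin.snoc_last _ _⟩
    · intro p hp
      simp only [Finset.mem_filter, Finset.mem_univ, true_and] at hp
      funext r
      rcases Fin.eq_castSucc_or_eq_last r with ⟨r0, rfl⟩ | rfl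
      · simp
      · simp [hp.2]
    · intro q hq; funext r; simp
    · intro p hp
      congr 1
      funext r
      rcases Fin.eq_castSucc_or_eq_last r with ⟨r0, rfl⟩ | rfl
      · simp
      · simp only [Finset.mem_filter, Finset.mem_univ, true_and] at hp
        simp [hp.2]

private lemma sum_mod' (N : ℕ → ℕ) (A B : ℤ)
    (hAB : A + B = (N 0 : ℤ) + (N 1 : ℤ) + (N 2 : ℤ) - 1) :
    ∀ k : ℕ, 2 ≤ k →
    ∑ i ∈ Finset.range k, (if i = 0 then A else if i = 1 then B else (N (i+1) : ℤ))
      = (∑ i ∈ Finset.range (k+1), (N i : ℤ)) - 1 := by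
  intro k
  induction k with
  | zero => omega
  | succ n ih =>
    intro hk
    rcases Nat.lt_or_ge n 2 with h | h
    · interval_cases n
      · exact absurd hk (by norm_num)
      · simp [Finset.sum_range_succ]
        linarith [hAB]
    · rw [Finset.sum_range_succ, ih h]
      conv_rhs => rw [Finset.sum_range_succ]
      have h0 : n ≠ 0 := by omega
      have h1 : n ≠ 1 := by omega
      simp only [if_neg h0, if_neg h1]
      ring

/-- The nested-sum coefficient
`c^{(b)}_{a,N} = ∑_{0 ≤ p_1 ≤ ⋯ ≤ p_{b−a} ≤ a} ∏_{r=1}^{b−a}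
γ(N_0 − a + p_r, |N|_{0; b−p_r−r+1} − (b−p_r−r))`, where `|N|_{0;p} = N_0 + ⋯ + N_p`;
for `b ≤ a` this is the empty sum convention `c^{(a)}_{a,N} = 1`.
Weakly increasing tuples `(p_1, …, p_{b−a})` with entries in `{0, …, a}` are encoded as
monotone functions `Fin (b−a) → Fin (a+1)` (0-based index `r₀ = r − 1`). -/
noncomputable def cCoeff {R : Type*} [CommRing R] (γ : ℤ → ℤ → R) (N : ℕ → ℤ)
    (a b : ℕ) : R :=
  ∑ p ∈ Finset.univ.filter (fun p : Fin (b - a) → Fin (a + 1) =>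
      ∀ i j, i ≤ j → p i ≤ p j),
    ∏ r : Fin (b - a),
      γ (N 0 - (a : ℤ) + ((p r : ℕ) : ℤ))
        ((∑ i ∈ Finset.range (b - (p r : ℕ) - (r : ℕ) + 1), N i)
          - ((b : ℤ) - ((p r : ℕ) : ℤ) - ((r : ℕ) : ℤ) - 1))

private lemma cCoeff_eq {R : Type*} [CommRing R] (γ : ℤ → ℤ → R) (N : ℕ → ℤ)
    (a b n k : ℕ) (hn : b - a = n) (hk : a + 1 = k) :
    cCoeff γ N a b
      = ∑ p ∈ Finset.univ.filter (fun p : Fin n → Fin k =>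
          ∀ i j, i ≤ j → p i ≤ p j),
        ∏ r : Fin n,
          γ (N 0 - (a : ℤ) + ((p r : ℕ) : ℤ))
            ((∑ i ∈ Finset.range (b - (p r : ℕ) - (r : ℕ) + 1), N i)
              - ((b : ℤ) - ((p r : ℕ) : ℤ) - ((r : ℕ) : ℤ) - 1)) := by
  subst hn hk
  rfl


/-- the recursion identities (3.37) and (3.38) for the nested sums
`c^{(b)}_{a,N}`, for an arbitrary function `γ` valued in a commutative ring.  With
`N = (N_0, …, N_{T+1})`, `N' = (N_0−1, N_1+N_2, N_3, …, N_{T+1})` and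
`N'' = (N_0, N_1+N_2−1, N_3, …, N_{T+1})`:
(i)  `c^{(T)}_{0,N} = c^{(T−1)}_{0,N''} · γ(N_0, N_0+N_1)`;
(ii) `c^{(T)}_{u,N} = c^{(T−1)}_{u−1,N'} + γ(N_0, N_0+N_1) · c^{(T−1)}_{u,N''}`
for `1 ≤ u ≤ T−1`. -/
theorem cCoeff_recursion {R : Type*} [CommRing R] (γ : ℤ → ℤ → R)
    (T : ℕ) (hT : 1 ≤ T) (N : ℕ → ℕ) :
    (cCoeff γ (fun i => (N i : ℤ)) 0 T
        = cCoeff γ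
            (fun i => if i = 0 then (N 0 : ℤ)
              else if i = 1 then (N 1 : ℤ) + (N 2 : ℤ) - 1 else (N (i + 1) : ℤ))
            0 (T - 1) * γ (N 0) ((N 0 : ℤ) + (N 1 : ℤ))) ∧
    (∀ u : ℕ, 1 ≤ u → u ≤ T - 1 →
      cCoeff γ (fun i => (N i : ℤ)) u T
        = cCoeff γ
            (fun i => if i = 0 then (N 0 : ℤ) - 1
              else if i = 1 then (N 1 : ℤ) + (N 2 : ℤ) else (N (i + 1) : ℤ))
            (u - 1) (T - 1)
          + γ (N 0) ((N 0 : ℤ) + (N 1 : ℤ)) *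
            cCoeff γ
              (fun i => if i = 0 then (N 0 : ℤ)
                else if i = 1 then (N 1 : ℤ) + (N 2 : ℤ) - 1 else (N (i + 1) : ℤ))
              u (T - 1)) := by
  constructor
  · -- part (i)
    obtain ⟨m, rfl⟩ : ∃ m, T = m + 1 := ⟨T - 1, by omega⟩
    rw [show m + 1 - 1 = m from rfl]
    rw [cCoeff_eq γ _ 0 (m+1) (m+1) 1 rfl rfl, cCoeff_eq γ _ 0 m m 1 rfl rfl]
    have huniv : ∀ n : ℕ, (Finset.univ.filter (fun p : Fin n → Fin 1 =>
        ∀ i j, i ≤ j → p i ≤ p j)) = Finset.univ := fun n =>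
      Finset.filter_true_of_mem fun p _ => fun i j _ => le_of_eq (Subsingleton.elim _ _)
    rw [huniv, huniv, Fintype.sum_unique, Fintype.sum_unique]
    simp only [Fin.val_eq_zero, Nat.cast_zero, add_zero, Nat.cast_ofNat, CharP.cast_eq_zero, sub_zero, Nat.sub_zero]
    rw [Fin.prod_univ_castSucc]
    congr 1
    · refine Finset.prod_congr rfl fun r _ => ?_
      have hr : (r : ℕ) < m := r.isLt
      simp only [Fin.coe_castSucc, if_true]
      rw [sum_mod' N _ _ (by push_cast; ring) (m - (r : ℕ) + 1) (by omega)]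
      rw [show m + 1 - (r : ℕ) + 1 = m - (r : ℕ) + 1 + 1 from by omega]
      congr 1
      push_cast
      ring
    · simp only [Fin.val_last]
      rw [show m + 1 - m + 1 = 2 from by omega]
      rw [show (2:ℕ) = 1 + 1 from rfl, Finset.sum_range_succ, Finset.sum_range_one]
      congr 1
      push_cast
      ring
  · -- part (ii)
    intro u hu1 hu2
    obtain ⟨v, rfl⟩ : ∃ v, u = v + 1 := ⟨u - 1, by omega⟩
    obtain ⟨m, rfl⟩ : ∃ m, T = v + m + 2 := ⟨T - v - 2, by omega⟩
    rw [show v + m + 2 - 1 = v + m + 1 from rfl, show v + 1 - 1 = v from rfl]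
    rw [cCoeff_eq γ _ (v+1) (v+m+2) (m+1) (v+1+1) (by omega) rfl,
        cCoeff_eq γ _ v (v+m+1) (m+1) (v+1) (by omega) rfl,
        cCoeff_eq γ _ (v+1) (v+m+1) m (v+1+1) (by omega) rfl]
    rw [sum_split', Finset.mul_sum]
    congr 1
    · -- castSucc piece vs N' piece
      refine Finset.sum_congr rfl fun q hq => Finset.prod_congr rfl fun r _ => ?_
      have hqr : ((q r : Fin (v+1)) : ℕ) ≤ v := Fin.is_le _
      have hr : (r : ℕ) ≤ m := Fin.is_le _
      simp only [Fin.coe_castSucc, if_true]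
      rw [sum_mod' N _ _ (by push_cast; ring) (v + m + 1 - (q r : ℕ) - (r : ℕ) + 1) (by omega)]
      rw [show v + m + 2 - (q r : ℕ) - (r : ℕ) + 1
          = v + m + 1 - (q r : ℕ) - (r : ℕ) + 1 + 1 from by omega]
      congr 1
      · push_cast; ring
      · push_cast; ring
    · -- snoc piece vs γ * N'' piece
      refine Finset.sum_congr rfl fun q hq => ?_
      rw [Fin.prod_univ_castSucc]
      have hlast : γ ((N 0 : ℤ) - ((v+1 : ℕ) : ℤ)
            + (((Fin.snoc q (Fin.last (v+1)) : Fin (m+1) → Fin (v+1+1)) (Fin.last m) : ℕ) : ℤ))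
          ((∑ i ∈ Finset.range (v + m + 2
                - ((Fin.snoc q (Fin.last (v+1)) : Fin (m+1) → Fin (v+1+1)) (Fin.last m) : ℕ)
                - ((Fin.last m : Fin (m+1)) : ℕ) + 1), ((N i : ℤ)))
            - (((v + m + 2 : ℕ) : ℤ)
                - (((Fin.snoc q (Fin.last (v+1)) : Fin (m+1) → Fin (v+1+1)) (Fin.last m) : ℕ) : ℤ)
                - (((Fin.last m : Fin (m+1)) : ℕ) : ℤ) - 1))
          = γ (N 0) ((N 0 : ℤ) + (N 1 : ℤ)) := by
        simp only [Fin.snoc_last, Fin.val_last]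
        rw [show v + m + 2 - (v + 1) - m + 1 = 2 from by omega]
        rw [show (2:ℕ) = 1 + 1 from rfl, Finset.sum_range_succ, Finset.sum_range_one]
        congr 1
        · push_cast; ring
        · push_cast; ring
      rw [hlast, mul_comm]
      congr 1
      refine Finset.prod_congr rfl fun r _ => ?_
      have hqr : ((q r : Fin (v+1+1)) : ℕ) ≤ v + 1 := Fin.is_le _
      have hr : (r : ℕ) < m := r.isLt
      simp only [Fin.snoc_castSucc, Fin.coe_castSucc, if_true]
      rw [sum_mod' N _ _ (by push_cast; ring) (v + m + 1 - (q r : ℕ) - (r : ℕ) + 1) (by omega)]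
      rw [show v + m + 2 - (q r : ℕ) - (r : ℕ) + 1
          = v + m + 1 - (q r : ℕ) - (r : ℕ) + 1 + 1 from by omega]
      congr 1 <;> · push_cast; ring
end
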